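/- For any disjunctive sequent calculus (L(P),⊢), the family |(L(P),⊢)| of all logical states, ordered by set inclusion, is a pointed dcpo: Tau(P), the set of tautologies, is its least element, and the supremum of any directed family of logical states is its union. -/

import Mathlib

/- ## Syntax of disjunctive propositional logic -/

/-- Raw formulae over a set `P` of atomic formulae: atoms, the constants
`T` and `F`, binary conjunction, and disjunction of an arbitrary family
of formulae. -/
inductive Fm (P : Type) : Type 1 where
  | atom : P → Fm P
  | tt : Fm P
  | ff : Fm P
  | conj : Fm P → Fm P → Fm P
  | disj : {ι : Type} → (ι → Fm P) → Fm P

namespace Fm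

/-- The valid sequents of the disjunctive sequent calculus generated from the
disjunctive basis `(P, A)`, where `A` is the set of atomic disjointness
assumptions `p₁,…,pₙ ⊢ F` (each given by a finite nonempty set of atoms). -/
inductive Seq {P : Type} (A : Set (Set P)) : Set (Fm P) → Fm P → Prop where
  | ax {s : Set P} : s ∈ A → s.Finite → s.Nonempty → Seq A (Fm.atom '' s) Fm.ff
  | id (φ : Fm P) : Seq A {φ} φ
  | lwk {Γ : Set (Fm P)} {ψ : Fm P} (φ : Fm P) : Seq A Γ ψ → Seq A (insert φ Γ) ψ
  | cut {Γ Δ : Set (Fm P)} {φ ψ : Fm P} :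
      Seq A Γ φ → Seq A (insert φ Δ) ψ → Seq A (Γ ∪ Δ) ψ
  | lf (φ : Fm P) : Seq A {Fm.ff} φ
  | rt : Seq A ∅ Fm.tt
  | landl {Γ : Set (Fm P)} {φ ψ θ : Fm P} :
      Seq A (insert φ (insert ψ Γ)) θ → Seq A (insert (Fm.conj φ ψ) Γ) θ
  | randr {Γ Δ : Set (Fm P)} {φ ψ : Fm P} :
      Seq A Γ φ → Seq A Δ ψ → Seq A (Γ ∪ Δ) (Fm.conj φ ψ)
  | ldisj {Γ : Set (Fm P)} {θ : Fm P} {ι : Type} {f : ι → Fm P} :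
      (∀ i, Seq A (insert (f i) Γ) θ) → (∀ i j, i ≠ j → Seq A {f i, f j} Fm.ff) →
      Seq A (insert (Fm.disj f) Γ) θ
  | rdisj {Γ : Set (Fm P)} {ι : Type} {f : ι → Fm P} (i₀ : ι) :
      Seq A Γ (f i₀) → (∀ i j, i ≠ j → Seq A {f i, f j} Fm.ff) →
      Seq A Γ (Fm.disj f)

/-- The wellformed formulae `L(P)` generated from the disjunctive basis
`(P, A)`: disjunctions are only formed over provably pairwise disjoint
families. -/
inductive WF {P : Type} (A : Set (Set P)) : Fm P → Prop where
  | atom (p : P) : WF A (Fm.atom p)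
  | tt : WF A Fm.tt
  | ff : WF A Fm.ff
  | conj {φ ψ : Fm P} : WF A φ → WF A ψ → WF A (Fm.conj φ ψ)
  | disj {ι : Type} {f : ι → Fm P} : (∀ i, WF A (f i)) →
      (∀ i j, i ≠ j → Seq A {f i, f j} Fm.ff) → WF A (Fm.disj f)

end Fm

/- ## Generic notions relative to a wellformedness predicate `W` (the set
`L(P)` of formulae) and an entailment relation `E` (the valid sequents). -/

section Defs

variable {P Q R : Type}

/-- `φ` is a tautology: `T ⊢ φ` is valid. -/
def Taut (W : Fm P → Prop) (E : Set (Fm P) → Fm P → Prop) (φ : Fm P) : Prop :=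
  W φ ∧ E {Fm.tt} φ

/-- `φ` is a contradiction: `φ ⊢ F` is valid. -/
def Contra (W : Fm P → Prop) (E : Set (Fm P) → Fm P → Prop) (φ : Fm P) : Prop :=
  W φ ∧ E {φ} Fm.ff

/-- `φ` is satisfiable: neither a tautology nor a contradiction. -/
def Satisfiable (W : Fm P → Prop) (E : Set (Fm P) → Fm P → Prop) (φ : Fm P) : Prop :=
  W φ ∧ ¬ Taut W E φ ∧ ¬ Contra W E φ

/-- Built up from atomic formulae only by conjunctive connectives. -/
inductive ConjShape {P : Type} : Fm P → Prop where
  | atom (p : P) : ConjShape (Fm.atom p)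
  | conj {φ ψ : Fm P} : ConjShape φ → ConjShape ψ → ConjShape (Fm.conj φ ψ)

/-- A conjunction: a satisfiable formula built up from atomic formulae only
by conjunctive connectives. -/
def IsConjForm (W : Fm P → Prop) (E : Set (Fm P) → Fm P → Prop) (φ : Fm P) : Prop :=
  ConjShape φ ∧ Satisfiable W E φ

/-- `X[⊢] = {φ ∈ L(P) : Γ ⊢ φ is valid for some finite Γ ⊆ X}`. -/
def entClose (W : Fm P → Prop) (E : Set (Fm P) → Fm P → Prop) (X : Set (Fm P)) :
    Set (Fm P) :=
  {φ | W φ ∧ ∃ Γ : Set (Fm P), Γ ⊆ X ∧ Γ.Finite ∧ E Γ φ}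

/-- A logical state: a nonempty proper subset `S` of `L(P)` such that
(S1) any flat formula `⋁̇ᵢ μᵢ` in `S` has some disjunct `μᵢ₀ ∈ S`, and
(S2) `S[⊢] ⊆ S`. -/
structure IsLogicalState (W : Fm P → Prop) (E : Set (Fm P) → Fm P → Prop)
    (S : Set (Fm P)) : Prop where
  nonempty : S.Nonempty
  subset : S ⊆ {φ | W φ}
  proper : S ≠ {φ | W φ}
  s1 : ∀ (ι : Type) (f : ι → Fm P), (∀ i, IsConjForm W E (f i)) →
      (∀ i j, i ≠ j → E {f i, f j} Fm.ff) → Satisfiable W E (Fm.disj f) →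
      Fm.disj f ∈ S → ∃ i, f i ∈ S
  s2 : entClose W E S ⊆ S

/-- `[X]_S`: the intersection of all logical states `T` with `X ⊆ T ⊆ S`. -/
def clIn (W : Fm P → Prop) (E : Set (Fm P) → Fm P → Prop) (X S : Set (Fm P)) :
    Set (Fm P) :=
  ⋂₀ {T | IsLogicalState W E T ∧ X ⊆ T ∧ T ⊆ S}

/-- An irreducible conjunction. -/
def IsIrredConj (W : Fm P → Prop) (E : Set (Fm P) → Fm P → Prop) (μ : Fm P) : Prop :=
  IsConjForm W E μ ∧ ∀ (ι : Type) (f : ι → Fm P), (∀ i, W (f i)) →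
    (∀ i j, i ≠ j → E {f i, f j} Fm.ff) → E {μ} (Fm.disj f) → ∃ i, E {μ} (f i)

/-- An expressive disjunctive sequent calculus: every satisfiable formula is
logically equivalent to an irreducible flat formula (from below disjunctwise). -/
def Expressive (W : Fm P → Prop) (E : Set (Fm P) → Fm P → Prop) : Prop :=
  ∀ ψ : Fm P, Satisfiable W E ψ → ∃ (ι : Type) (f : ι → Fm P),
    (∀ i, IsIrredConj W E (f i)) ∧ (∀ i j, i ≠ j → E {f i, f j} Fm.ff) ∧
    Satisfiable W E (Fm.disj f) ∧ E {ψ} (Fm.disj f) ∧ ∀ i, E {f i} ψ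

/-- `Θ[X] = {φ ∈ L(Q) : (μ,φ) ∈ Θ for some μ ∈ X ∩ IC(P)}`. -/
def ThetaImage (WP : Fm P → Prop) (EP : Set (Fm P) → Fm P → Prop)
    (Θ : Fm P → Fm Q → Prop) (X : Set (Fm P)) : Set (Fm Q) :=
  {φ | ∃ μ ∈ X, IsIrredConj WP EP μ ∧ Θ μ φ}

/-- A consequence relation `Θ ⊆ IC(P) × L(Q)` satisfying (R1), (R2), (R3). -/
def IsConsRel (WP : Fm P → Prop) (EP : Set (Fm P) → Fm P → Prop)
    (WQ : Fm Q → Prop) (EQ : Set (Fm Q) → Fm Q → Prop)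
    (Θ : Fm P → Fm Q → Prop) : Prop :=
  (∀ μ ψ, Θ μ ψ → IsIrredConj WP EP μ ∧ WQ ψ) ∧
  (∀ μ ν ψ, IsIrredConj WP EP μ → EP {μ} ν → Θ ν ψ → Θ μ ψ) ∧
  (∀ μ φ ψ, WQ ψ → Θ μ φ → EQ {φ} ψ → Θ μ ψ) ∧
  (∀ μ ψ, Θ μ ψ → ∃ ν, IsIrredConj WQ EQ ν ∧ Θ μ ν ∧ EQ {ν} ψ)

/-- Composition of consequence relations. -/
def consRelComp (WQ : Fm Q → Prop) (EQ : Set (Fm Q) → Fm Q → Prop)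
    (Θ : Fm P → Fm Q → Prop) (Θ' : Fm Q → Fm R → Prop) : Fm P → Fm R → Prop :=
  fun μ φ => ∃ ν, IsIrredConj WQ EQ ν ∧ Θ μ ν ∧ Θ' ν φ

/-- The identity consequence relation `(μ,φ) ∈ id_P ↔ φ ∈ {μ}[⊢_P]`. -/
def consRelId (W : Fm P → Prop) (E : Set (Fm P) → Fm P → Prop) : Fm P → Fm P → Prop :=
  fun μ φ => IsIrredConj W E μ ∧ φ ∈ entClose W E {μ}

end Defs

/-- The poset of logical states of the calculus generated by the basis `(P,A)`,
ordered by set inclusion. -/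
abbrev LSt (P : Type) (A : Set (Set P)) : Type 1 :=
  {S : Set (Fm P) // IsLogicalState (Fm.WF A) (Fm.Seq A) S}

/- ## Domain-theoretic notions -/

/-- A compact element of a poset (w.r.t. suprema of directed subsets). -/
def IsCompactElt {α : Type*} [PartialOrder α] (x : α) : Prop :=
  ∀ d : Set α, d.Nonempty → DirectedOn (· ≤ ·) d → ∀ s, IsLUB d s → x ≤ s →
    ∃ y ∈ d, x ≤ y

/-- An algebraic domain: a pointed dcpo in which every element is the
supremum of the directed set of compact elements below it. -/
def IsAlgebraicDomain (α : Type*) [PartialOrder α] : Prop :=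
  (∃ b : α, ∀ x, b ≤ x) ∧
  (∀ d : Set α, d.Nonempty → DirectedOn (· ≤ ·) d → ∃ s, IsLUB d s) ∧
  (∀ x : α, ({k : α | IsCompactElt k ∧ k ≤ x}).Nonempty ∧
    DirectedOn (· ≤ ·) {k : α | IsCompactElt k ∧ k ≤ x} ∧
    IsLUB {k : α | IsCompactElt k ∧ k ≤ x} x)

/-- An algebraic L-domain: an algebraic domain in which every principal ideal
`↓x` is a complete lattice (every subset of `↓x` has a supremum in `↓x`). -/
def IsAlgebraicLDomain (α : Type*) [PartialOrder α] : Prop :=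
  IsAlgebraicDomain α ∧
  ∀ x : α, ∀ T : Set α, T ⊆ Set.Iic x → ∃ s ∈ Set.Iic x,
    (∀ t ∈ T, t ≤ s) ∧ ∀ u ∈ Set.Iic x, (∀ t ∈ T, t ≤ u) → s ≤ u

/- ## The calculus associated with an algebraic L-domain -/

/-- The atomic formulae of the associated calculus: (upsets of) elements of
`K*(D)`, the compact non-bottom elements. -/
abbrev LAtom (D : Type) [PartialOrder D] : Type := {x : D // IsCompactElt x ∧ ¬ IsBot x}

/-- The interpretation `φ̂ ⊆ D` of a formula: `F, T, ∧, ⋁̇` become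
`∅, D`, intersection and union. -/
def hat {D : Type} [PartialOrder D] : Fm (LAtom D) → Set D
  | Fm.atom x => Set.Ici x.val
  | Fm.tt => Set.univ
  | Fm.ff => ∅
  | Fm.conj φ ψ => hat φ ∩ hat ψ
  | Fm.disj f => ⋃ i, hat (f i)

/-- The formulae `L(P_D)` of the associated calculus: disjunctions only of
families with pairwise disjoint interpretations. -/
inductive DWF {D : Type} [PartialOrder D] : Fm (LAtom D) → Prop where
  | atom (p : LAtom D) : DWF (Fm.atom p)
  | tt : DWF Fm.tt
  | ff : DWF Fm.ff
  | conj {φ ψ : Fm (LAtom D)} : DWF φ → DWF ψ → DWF (Fm.conj φ ψ)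
  | disj {ι : Type} {f : ι → Fm (LAtom D)} : (∀ i, DWF (f i)) →
      (∀ i j, i ≠ j → hat (f i) ∩ hat (f j) = ∅) → DWF (Fm.disj f)

/-- Validity in the associated calculus: `ψ₁,…,ψₙ ⊢_D φ` iff
`ψ̂₁ ∩ … ∩ ψ̂ₙ ⊆ φ̂`. -/
def DSeq {D : Type} [PartialOrder D] (Γ : Set (Fm (LAtom D))) (φ : Fm (LAtom D)) : Prop :=
  ⋂₀ (hat '' Γ) ⊆ hat φ

/-- A decomposable subset of `D`: the upper set `↑A` of a pairwise
inconsistent set `A` of compact elements. -/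
def IsDecomposable {D : Type} [PartialOrder D] (U : Set D) : Prop :=
  ∃ A : Set D, (∀ a ∈ A, IsCompactElt a) ∧
    (∀ a ∈ A, ∀ b ∈ A, a ≠ b → Set.Ici a ∩ Set.Ici b = ∅) ∧
    U = ⋃ a ∈ A, Set.Ici a

/-- The conjunction `↑x₁ ∧ ↑x₂ ∧ … ∧ ↑xₙ` of a nonempty list of atoms. -/
def bigConj {P : Type} (x : P) (l : List P) : Fm P :=
  l.foldl (fun φ y => Fm.conj φ (Fm.atom y)) (Fm.atom x)

section Aux

variable {P : Type} {A : Set (Set P)}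

/-- The "all atoms false" valuation. -/
def evAux {P : Type} : Fm P → Prop
  | Fm.atom _ => False
  | Fm.tt => True
  | Fm.ff => False
  | Fm.conj φ ψ => evAux φ ∧ evAux ψ
  | Fm.disj f => ∃ i, evAux (f i)

theorem evAux_sound {Γ : Set (Fm P)} {φ : Fm P} (h : Fm.Seq A Γ φ)
    (hΓ : ∀ ψ ∈ Γ, evAux ψ) : evAux φ := by
  induction h with
  | ax hs _ hne =>
      obtain ⟨p, hp⟩ := hne
      exact absurd (hΓ (Fm.atom p) ⟨p, hp, rfl⟩) (by simp [evAux])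
  | id φ => exact hΓ φ rfl
  | lwk φ _ ih => exact ih fun ψ hψ => hΓ ψ (Set.mem_insert_of_mem _ hψ)
  | cut _ _ ih1 ih2 =>
      refine ih2 fun ψ hψ => ?_
      rcases hψ with hψ | hψ
      · exact hψ ▸ ih1 fun θ hθ => hΓ θ (Or.inl hθ)
      · exact hΓ ψ (Or.inr hψ)
  | lf φ => exact absurd (hΓ Fm.ff rfl) (by simp [evAux])
  | rt => trivial
  | landl _ ih =>
      have hc := hΓ _ (Set.mem_insert _ _)
      refine ih fun ψ hψ => ?_
      rcases hψ with h1 | h1 | h1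
      · exact h1 ▸ hc.1
      · exact h1 ▸ hc.2
      · exact hΓ ψ (Set.mem_insert_of_mem _ h1)
  | randr _ _ ih1 ih2 =>
      exact ⟨ih1 fun ψ hψ => hΓ ψ (Or.inl hψ), ih2 fun ψ hψ => hΓ ψ (Or.inr hψ)⟩
  | ldisj _ _ ih _ =>
      obtain ⟨i, hi⟩ := hΓ _ (Set.mem_insert _ _)
      exact ih i fun ψ hψ => by
        rcases hψ with h1 | h1
        · exact h1 ▸ hi
        · exact hΓ ψ (Set.mem_insert_of_mem _ h1)
  | rdisj i₀ _ _ ih _ => exact ⟨i₀, ih hΓ⟩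

theorem not_taut_ff : ¬ Fm.Seq A {Fm.tt} Fm.ff := by
  intro h
  exact evAux_sound h (fun ψ hψ => hψ ▸ trivial)

/-- Cutting away a finite set of tautological hypotheses. -/
theorem cut_tauts {Γ : Set (Fm P)} (hfin : Γ.Finite)
    (hT : ∀ γ ∈ Γ, Fm.Seq A {Fm.tt} γ) {φ : Fm P}
    (h : Fm.Seq A (Γ ∪ {Fm.tt}) φ) : Fm.Seq A {Fm.tt} φ := by
  revert hT h
  refine Set.Finite.induction_on
    (motive := fun Γ _ => (∀ γ ∈ Γ, Fm.Seq A {Fm.tt} γ) →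
      Fm.Seq A (Γ ∪ {Fm.tt}) φ → Fm.Seq A {Fm.tt} φ) _ hfin ?_ ?_
  · intro _ h; simpa using h
  · intro γ Δ _ _ ih hT h
    have h1 : Fm.Seq A (insert γ (Δ ∪ {Fm.tt})) φ := by
      rwa [Set.insert_union] at h
    have h2 := Fm.Seq.cut (hT γ (Set.mem_insert _ _)) h1
    have h3 : ({Fm.tt} : Set (Fm P)) ∪ (Δ ∪ {Fm.tt}) = Δ ∪ {Fm.tt} := by
      rw [Set.singleton_union, Set.insert_eq_self.mpr (by simp)]
    refine ih (fun δ hδ => hT δ (Set.mem_insert_of_mem _ hδ)) ?_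
    rwa [h3] at h2
      
/-- Any logical state does not contain `ff`. -/
theorem ff_not_mem {S : Set (Fm P)} (hS : IsLogicalState (Fm.WF A) (Fm.Seq A) S) :
    Fm.ff ∉ S := by
  intro hff
  apply hS.proper
  apply Set.Subset.antisymm hS.subset
  intro φ hφ
  exact hS.s2 ⟨hφ, {Fm.ff}, by simpa using hff, Set.finite_singleton _, Fm.Seq.lf φ⟩

/-- `tt` belongs to any logical state. -/
theorem tt_mem {S : Set (Fm P)} (hS : IsLogicalState (Fm.WF A) (Fm.Seq A) S) :
    Fm.tt ∈ S :=
  hS.s2 ⟨Fm.WF.tt, ∅, Set.empty_subset _, Set.finite_empty, Fm.Seq.rt⟩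

end Aux

/-- The family of all logical states, ordered by inclusion, is a
pointed dcpo: `Tau(P)` is its least element, and the supremum of any directed
family of logical states is its union. -/
theorem stmt6 (P : Type) (A : Set (Set P)) :
    IsLogicalState (Fm.WF A) (Fm.Seq A) {φ | Taut (Fm.WF A) (Fm.Seq A) φ} ∧
    (∀ S : Set (Fm P), IsLogicalState (Fm.WF A) (Fm.Seq A) S →
      {φ | Taut (Fm.WF A) (Fm.Seq A) φ} ⊆ S) ∧
    (∀ 𝒟 : Set (LSt P A), 𝒟.Nonempty → DirectedOn (· ≤ ·) 𝒟 →
      ∃ s : LSt P A, IsLUB 𝒟 s ∧ (s : Set (Fm P)) = ⋃₀ (Subtype.val '' 𝒟)) := by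
  have hTaut : IsLogicalState (Fm.WF A) (Fm.Seq A) {φ | Taut (Fm.WF A) (Fm.Seq A) φ} := by
    constructor
    · exact ⟨Fm.tt, Fm.WF.tt, Fm.Seq.id _⟩
    · exact fun φ hφ => hφ.1
    · intro h
      have : Taut (Fm.WF A) (Fm.Seq A) Fm.ff := by
        have : Fm.ff ∈ {φ | Fm.WF A φ} := Fm.WF.ff
        rwa [← h] at this
      exact not_taut_ff this.2
    · intro ι f _ _ hsat hmem
      exact absurd hmem hsat.2.1
    · rintro φ ⟨hwf, Γ, hΓsub, hΓfin, hseq⟩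
      refine ⟨hwf, ?_⟩
      refine cut_tauts hΓfin (fun γ hγ => (hΓsub hγ).2) ?_
      have := Fm.Seq.lwk Fm.tt hseq
      have heq : insert Fm.tt Γ = Γ ∪ {Fm.tt} := Set.union_singleton.symm
      rwa [heq] at this
  refine ⟨hTaut, ?_, ?_⟩
  · intro S hS φ hφ
    exact hS.s2 ⟨hφ.1, {Fm.tt}, by simpa using tt_mem hS, Set.finite_singleton _, hφ.2⟩
  · intro 𝒟 hne hdir
    set U : Set (Fm P) := ⋃₀ (Subtype.val '' 𝒟) with hU
    have hmemU : ∀ φ, φ ∈ U ↔ ∃ S ∈ 𝒟, φ ∈ (S : Set (Fm P)) := by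
      intro φ
      simp [hU, Set.mem_sUnion]
    have hstate : IsLogicalState (Fm.WF A) (Fm.Seq A) U := by
      constructor
      · obtain ⟨S, hS⟩ := hne
        obtain ⟨φ, hφ⟩ := S.2.nonempty
        exact ⟨φ, (hmemU φ).2 ⟨S, hS, hφ⟩⟩
      · intro φ hφ
        obtain ⟨S, _, hφS⟩ := (hmemU φ).1 hφ
        exact S.2.subset hφS
      · intro h
        obtain ⟨S, _, hffS⟩ := (hmemU Fm.ff).1 (h ▸ Fm.WF.ff)
        exact ff_not_mem S.2 hffS
      · intro ι f hcf hdisj hsat hmem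
        obtain ⟨S, hS𝒟, hmemS⟩ := (hmemU _).1 hmem
        obtain ⟨i, hi⟩ := S.2.s1 ι f hcf hdisj hsat hmemS
        exact ⟨i, (hmemU _).2 ⟨S, hS𝒟, hi⟩⟩
      · rintro φ ⟨hwf, Γ, hΓsub, hΓfin, hseq⟩
        -- find a single state containing Γ
        have hbound : ∃ S ∈ 𝒟, Γ ⊆ (S : Set (Fm P)) := by
          clear hseq hwf
          revert hΓsub
          refine Set.Finite.induction_on
            (motive := fun Γ _ => Γ ⊆ U → ∃ S ∈ 𝒟, Γ ⊆ (S : Set (Fm P))) _ hΓfin ?_ ?_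
          · intro _
            obtain ⟨S, hS⟩ := hne
            exact ⟨S, hS, Set.empty_subset _⟩
          · intro γ Δ _ _ ih hΓsub
            obtain ⟨S₁, hS₁, hΔ⟩ := ih (fun x hx => hΓsub (Set.mem_insert_of_mem _ hx))
            obtain ⟨S₂, hS₂𝒟, hγ⟩ := (hmemU γ).1 (hΓsub (Set.mem_insert _ _))
            obtain ⟨S, hS𝒟, h1, h2⟩ := hdir S₁ hS₁ S₂ hS₂𝒟
            refine ⟨S, hS𝒟, ?_⟩
            intro x hx
            rcases hx with hx | hx
            · exact h2 (hx ▸ hγ)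
            · exact h1 (hΔ hx)
        obtain ⟨S, hS𝒟, hΓS⟩ := hbound
        exact (hmemU φ).2 ⟨S, hS𝒟, S.2.s2 ⟨hwf, Γ, hΓS, hΓfin, hseq⟩⟩
    refine ⟨⟨U, hstate⟩, ⟨?_, ?_⟩, rfl⟩
    · intro S hS
      show (S : Set (Fm P)) ⊆ U
      intro φ hφ
      exact (hmemU φ).2 ⟨S, hS, hφ⟩
    · intro T hT
      show U ⊆ (T : Set (Fm P))
      intro φ hφ
      obtain ⟨S, hS𝒟, hφS⟩ := (hmemU φ).1 hφ
      exact hT hS𝒟 hφS
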